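/- Let N ≥ 1 and let C : Matrix (Fin N) (Fin N) ℝ be column-stochastic (all entries nonnegative and every column sums to 1) and primitive, i.e., there exists m such that all entries of C^m are strictly positive. Let x0, y0 : Fin N → ℝ satisfy ∑_j y0 j = N and ∑_j x0 j = s. Then for every agent j, the ratio (C^k *ᵥ x0) j / (C^k *ᵥ y0) j tends to s / N as k → ∞. (Theorem 2: once the network stabilizes at time k' with N = |V(k')| active agents, total x-mass s = ∑ x̂_ℓ(k'), and total y-mass N — which hold by Theorem 1 — every active agent's ratio z_j(k) = x_j(k)/y_j(k) converges to the average of the joining masses (1/|V(k')|) ∑_{v_ℓ ∈ V(k')} x̂_ℓ(k').) -/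
import Mathlib


open Filter Matrix Finset

namespace OpenRCAux
variable {N : ℕ}

noncomputable def L1 (v : Fin N → ℝ) : ℝ := ∑ i, |v i|

lemma L1_nonneg (v : Fin N → ℝ) : 0 ≤ L1 v :=
  Finset.sum_nonneg fun i _ => abs_nonneg _

lemma abs_le_L1 (v : Fin N → ℝ) (j : Fin N) : |v j| ≤ L1 v :=
  Finset.single_le_sum (fun i _ => abs_nonneg (v i)) (Finset.mem_univ j)

lemma pow_nonneg' (C : Matrix (Fin N) (Fin N) ℝ) (hnn : ∀ i j, 0 ≤ C i j) (k : ℕ) :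
    ∀ i j, 0 ≤ (C ^ k) i j := by
  induction k with
  | zero => intro i j; rw [pow_zero]; by_cases h : i = j <;> simp [Matrix.one_apply, h]
  | succ n ih =>
      intro i j
      rw [pow_succ, Matrix.mul_apply]
      exact Finset.sum_nonneg fun l _ => mul_nonneg (ih i l) (hnn l j)

lemma pow_col (C : Matrix (Fin N) (Fin N) ℝ) (hcol : ∀ i, ∑ j, C j i = 1) (k : ℕ) :
    ∀ i, ∑ j, (C ^ k) j i = 1 := by
  induction k with
  | zero => intro i; rw [pow_zero]; simp [Matrix.one_apply]
  | succ n ih =>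
      intro i
      simp only [pow_succ, Matrix.mul_apply]
      rw [Finset.sum_comm]
      simp only [← Finset.sum_mul, ih]
      simp [hcol i]

lemma sum_mulVec (A : Matrix (Fin N) (Fin N) ℝ) (hcol : ∀ i, ∑ j, A j i = 1)
    (v : Fin N → ℝ) : ∑ i, (A *ᵥ v) i = ∑ j, v j := by
  simp only [mulVec, dotProduct]
  rw [Finset.sum_comm]
  simp only [← Finset.sum_mul, hcol]
  simp

lemma L1_mulVec_le (A : Matrix (Fin N) (Fin N) ℝ) (hnn : ∀ i j, 0 ≤ A i j)
    (hcol : ∀ i, ∑ j, A j i = 1) (v : Fin N → ℝ) : L1 (A *ᵥ v) ≤ L1 v := by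
  have h1 : ∀ i, |(A *ᵥ v) i| ≤ ∑ j, A i j * |v j| := by
    intro i
    calc |(A *ᵥ v) i| = |∑ j, A i j * v j| := rfl
      _ ≤ ∑ j, |A i j * v j| := Finset.abs_sum_le_sum_abs _ _
      _ = ∑ j, A i j * |v j| := by
          refine Finset.sum_congr rfl fun j _ => ?_
          rw [abs_mul, abs_of_nonneg (hnn i j)]
  calc L1 (A *ᵥ v) ≤ ∑ i, ∑ j, A i j * |v j| := Finset.sum_le_sum fun i _ => h1 i
    _ = ∑ j, (∑ i, A i j) * |v j| := by rw [Finset.sum_comm]; simp [Finset.sum_mul]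
    _ = L1 v := by simp [hcol, L1]

lemma L1_contract (A : Matrix (Fin N) (Fin N) ℝ) (hnn : ∀ i j, 0 ≤ A i j)
    (hcol : ∀ i, ∑ j, A j i = 1) (δ : ℝ) (hδ : ∀ i j, δ ≤ A i j)
    (v : Fin N → ℝ) (hv : ∑ j, v j = 0) :
    L1 (A *ᵥ v) ≤ (1 - N * δ) * L1 v := by
  have key : ∀ i, (A *ᵥ v) i = ∑ j, (A i j - δ) * v j := by
    intro i
    have : (A *ᵥ v) i = ∑ j, A i j * v j := rfl
    rw [this]
    simp only [sub_mul, Finset.sum_sub_distrib, ← Finset.mul_sum, hv, mul_zero, sub_zero]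
  have h1 : ∀ i, |(A *ᵥ v) i| ≤ ∑ j, (A i j - δ) * |v j| := by
    intro i
    rw [key i]
    calc |∑ j, (A i j - δ) * v j| ≤ ∑ j, |(A i j - δ) * v j| := Finset.abs_sum_le_sum_abs _ _
      _ = ∑ j, (A i j - δ) * |v j| := by
          refine Finset.sum_congr rfl fun j _ => ?_
          rw [abs_mul, abs_of_nonneg (by linarith [hδ i j])]
  calc L1 (A *ᵥ v) ≤ ∑ i, ∑ j, (A i j - δ) * |v j| := Finset.sum_le_sum fun i _ => h1 i
    _ = (1 - N * δ) * L1 v := by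
        rw [Finset.sum_comm, L1, Finset.mul_sum]
        refine Finset.sum_congr rfl fun j _ => ?_
        rw [← Finset.sum_mul]
        congr 1
        rw [Finset.sum_sub_distrib, hcol j]
        simp


lemma L1_pow_le_one (C : Matrix (Fin N) (Fin N) ℝ) (hnn : ∀ i j, 0 ≤ C i j)
    (hcol : ∀ i, ∑ j, C j i = 1) (v : Fin N → ℝ) (k : ℕ) :
    L1 (C ^ k *ᵥ v) ≤ L1 v := by
  induction k with
  | zero => simp [pow_zero]
  | succ n ih =>
      rw [pow_succ', ← Matrix.mulVec_mulVec]
      exact (L1_mulVec_le C hnn hcol _).trans ih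

lemma L1_pow_bound (C : Matrix (Fin N) (Fin N) ℝ) (hnn : ∀ i j, 0 ≤ C i j)
    (hcol : ∀ i, ∑ j, C j i = 1) (m : ℕ) (hm : 0 < m) (δ : ℝ)
    (hδ : ∀ i j, δ ≤ (C ^ m) i j) (k : ℕ) :
    ∀ v : Fin N → ℝ, ∑ j, v j = 0 →
      L1 (C ^ k *ᵥ v) ≤ (1 - N * δ) ^ (k / m) * L1 v := by
  induction k using Nat.strong_induction_on with
  | _ k ih =>
    intro v hv
    rcases lt_or_ge k m with hk | hk
    · rw [Nat.div_eq_of_lt hk, pow_zero, one_mul]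
      exact L1_pow_le_one C hnn hcol v k
    · obtain ⟨r, rfl⟩ : ∃ r, k = r + m := ⟨k - m, (Nat.sub_add_cancel hk).symm⟩
      have hr : r < r + m := Nat.lt_add_of_pos_right hm
      have hsplit : C ^ (r + m) *ᵥ v = C ^ r *ᵥ (C ^ m *ᵥ v) := by
        rw [Matrix.mulVec_mulVec, ← pow_add]
      have hsum0 : ∑ j, (C ^ m *ᵥ v) j = 0 := by
        rw [sum_mulVec _ (pow_col C hcol m) v, hv]
      have h1 : L1 (C ^ (r + m) *ᵥ v) ≤ (1 - N * δ) ^ (r / m) * L1 (C ^ m *ᵥ v) := by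
        rw [hsplit]; exact ih r hr _ hsum0
      have h2 : L1 (C ^ m *ᵥ v) ≤ (1 - N * δ) * L1 v :=
        L1_contract (C ^ m) (pow_nonneg' C hnn m) (pow_col C hcol m) δ hδ v hv
      have hc0 : 0 ≤ 1 - N * δ := by
        rcases Nat.eq_zero_or_pos N with h0 | hpos
        · subst h0; simp
        · have hle : (N : ℝ) * δ ≤ ∑ i, (C ^ m) i ⟨0, hpos⟩ := by
            calc (N : ℝ) * δ = ∑ _i : Fin N, δ := by
                  simp [Finset.sum_const, Finset.card_univ, nsmul_eq_mul]
              _ ≤ ∑ i, (C ^ m) i ⟨0, hpos⟩ :=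
                  Finset.sum_le_sum fun i _ => hδ i ⟨0, hpos⟩
          rw [pow_col C hcol m ⟨0, hpos⟩] at hle
          linarith
      calc L1 (C ^ (r + m) *ᵥ v) ≤ (1 - N * δ) ^ (r / m) * ((1 - N * δ) * L1 v) :=
            h1.trans (by
              exact mul_le_mul_of_nonneg_left h2 (pow_nonneg hc0 _))
        _ = (1 - N * δ) ^ (r / m + 1) * L1 v := by ring
        _ = (1 - N * δ) ^ ((r + m) / m) * L1 v := by rw [Nat.add_div_right _ hm]


lemma L1_pow_tendsto_zero (C : Matrix (Fin N) (Fin N) ℝ) (hnn : ∀ i j, 0 ≤ C i j)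
    (hcol : ∀ i, ∑ j, C j i = 1) (m : ℕ) (hm : 0 < m) (δ : ℝ) (hδpos : 0 < δ)
    (hδ : ∀ i j, δ ≤ (C ^ m) i j) (hNpos : 0 < N)
    (v : Fin N → ℝ) (hv : ∑ j, v j = 0) :
    Tendsto (fun k => L1 (C ^ k *ᵥ v)) atTop (nhds 0) := by
  have hc0 : 0 ≤ 1 - N * δ := by
    have hle : (N : ℝ) * δ ≤ ∑ i, (C ^ m) i ⟨0, hNpos⟩ := by
      calc (N : ℝ) * δ = ∑ _i : Fin N, δ := by
            simp [Finset.sum_const, Finset.card_univ, nsmul_eq_mul]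
        _ ≤ ∑ i, (C ^ m) i ⟨0, hNpos⟩ := Finset.sum_le_sum fun i _ => hδ i ⟨0, hNpos⟩
    rw [pow_col C hcol m ⟨0, hNpos⟩] at hle
    linarith
  have hc1 : 1 - N * δ < 1 := by
    have : (0 : ℝ) < N * δ := mul_pos (by exact_mod_cast hNpos) hδpos
    linarith
  have hdiv : Tendsto (fun k : ℕ => k / m) atTop atTop := by
    apply tendsto_atTop_atTop.mpr
    intro b
    exact ⟨b * m, fun k hk => (Nat.le_div_iff_mul_le hm).mpr hk⟩
  have hgeo : Tendsto (fun k : ℕ => (1 - N * δ) ^ (k / m) * L1 v) atTop (nhds 0) := by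
    have h := ((tendsto_pow_atTop_nhds_zero_of_lt_one hc0 hc1).comp hdiv).mul_const (L1 v)
    simpa using h
  exact squeeze_zero (fun k => L1_nonneg _)
    (fun k => L1_pow_bound C hnn hcol m hm δ hδ k v hv) hgeo

lemma mulVec_nonneg' (A : Matrix (Fin N) (Fin N) ℝ) (hnn : ∀ i j, 0 ≤ A i j)
    (v : Fin N → ℝ) (hv : ∀ i, 0 ≤ v i) : ∀ i, 0 ≤ (A *ᵥ v) i := by
  intro i
  show 0 ≤ ∑ l, A i l * v l
  exact Finset.sum_nonneg fun l _ => mul_nonneg (hnn i l) (hv l)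

lemma mulVec_lower (A : Matrix (Fin N) (Fin N) ℝ) (δ : ℝ)
    (hδ : ∀ i j, δ ≤ A i j) (v : Fin N → ℝ) (hv : ∀ i, 0 ≤ v i) (j : Fin N) :
    δ * (∑ i, v i) ≤ (A *ᵥ v) j := by
  calc δ * ∑ i, v i = ∑ i, δ * v i := Finset.mul_sum _ _ _
    _ ≤ ∑ i, A j i * v i :=
        Finset.sum_le_sum fun i _ => mul_le_mul_of_nonneg_right (hδ j i) (hv i)
    _ = (A *ᵥ v) j := rfl


end OpenRCAux


/-- Theorem 2 of the OpenRC paper: once the network stabilizes with `N` active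
agents, total x-mass `s` and total y-mass `N`, and the (column-stochastic,
primitive) weight matrix `C` drives the dynamics, every agent's ratio
converges to `s / N`, the average of the joining masses. -/
theorem openRC_ratio_convergence_stabilized {N : ℕ} (hN : 1 ≤ N)
    (C : Matrix (Fin N) (Fin N) ℝ)
    (hnonneg : ∀ i j, 0 ≤ C i j)
    (hcol : ∀ i, ∑ j, C j i = 1)
    (hprim : ∃ m, ∀ i j, 0 < (C ^ m) i j)
    (x0 y0 : Fin N → ℝ) (s : ℝ)
    (hy0 : ∑ j, y0 j = (N : ℝ)) (hx0 : ∑ j, x0 j = s) :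
    ∀ j, Tendsto (fun k => (C ^ k *ᵥ x0) j / (C ^ k *ᵥ y0) j)
      atTop (nhds (s / (N : ℝ))) := by
  classical
  intro j
  have hNpos : 0 < N := hN
  have hNR : (0 : ℝ) < N := by exact_mod_cast hNpos
  obtain ⟨m0, hm0⟩ := hprim
  -- obtain a positive exponent with positive entries
  have hexp : ∃ m, 0 < m ∧ ∀ i j, 0 < (C ^ m) i j := by
    rcases Nat.eq_zero_or_pos m0 with h0 | hpos
    · subst h0
      have hall : ∀ i j : Fin N, i = j := by
        intro i j
        by_contra h
        have h2 := hm0 i j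
        rw [pow_zero, Matrix.one_apply_ne h] at h2
        exact lt_irrefl 0 h2
      refine ⟨1, Nat.one_pos, fun i l => ?_⟩
      rw [pow_one]
      have h1 : ∑ b, C b l = C i l :=
        Finset.sum_eq_single_of_mem i (Finset.mem_univ i)
          (fun b _ hb => absurd (hall b i) hb)
      have h2 := hcol l
      rw [h1] at h2
      rw [h2]
      exact one_pos
    · exact ⟨m0, hpos, hm0⟩
  obtain ⟨m, hm, hCm⟩ := hexp
  -- the minimal entry δ of C ^ m
  obtain ⟨p, -, hmin⟩ := Finset.exists_min_image (Finset.univ : Finset (Fin N × Fin N))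
      (fun p => (C ^ m) p.1 p.2) ⟨(⟨0, hNpos⟩, ⟨0, hNpos⟩), Finset.mem_univ _⟩
  set δ := (C ^ m) p.1 p.2 with hδdef
  have hδpos : 0 < δ := hCm p.1 p.2
  have hδle : ∀ i l, δ ≤ (C ^ m) i l := fun i l => hmin (i, l) (Finset.mem_univ _)
  -- auxiliary vectors
  set e : Fin N → ℝ := fun _ => 1 with he
  set u : Fin N → ℝ := fun i => x0 i - (s / N) * y0 i with hu
  set v : Fin N → ℝ := fun i => y0 i - 1 with hv
  have hsum_u : ∑ i, u i = 0 := by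
    simp only [hu, Finset.sum_sub_distrib, ← Finset.mul_sum, hx0, hy0]
    rw [div_mul_cancel₀ s (ne_of_gt hNR)]
    ring
  have hsum_v : ∑ i, v i = 0 := by
    simp only [hv, Finset.sum_sub_distrib, hy0, Finset.sum_const, Finset.card_univ,
      Fintype.card_fin, nsmul_eq_mul, mul_one, sub_self]
  have hu0 : Tendsto (fun k => OpenRCAux.L1 (C ^ k *ᵥ u)) atTop (nhds 0) :=
    OpenRCAux.L1_pow_tendsto_zero C hnonneg hcol m hm δ hδpos hδle hNpos u hsum_u
  have hv0 : Tendsto (fun k => OpenRCAux.L1 (C ^ k *ᵥ v)) atTop (nhds 0) :=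
    OpenRCAux.L1_pow_tendsto_zero C hnonneg hcol m hm δ hδpos hδle hNpos v hsum_v
  -- lower bound on the all-ones evolutions
  have he_lb : ∀ k, m ≤ k → δ * N ≤ (C ^ k *ᵥ e) j := by
    intro k hk
    obtain ⟨r, rfl⟩ : ∃ r, k = m + r := ⟨k - m, (Nat.add_sub_cancel' hk).symm⟩
    rw [pow_add, ← Matrix.mulVec_mulVec]
    have hw : ∀ i, 0 ≤ (C ^ r *ᵥ e) i :=
      OpenRCAux.mulVec_nonneg' _ (OpenRCAux.pow_nonneg' C hnonneg r) _ (fun _ => zero_le_one)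
    have hws : ∑ i, (C ^ r *ᵥ e) i = (N : ℝ) := by
      rw [OpenRCAux.sum_mulVec _ (OpenRCAux.pow_col C hcol r)]
      simp [he]
    have h := OpenRCAux.mulVec_lower (C ^ m) δ hδle _ hw j
    rw [hws] at h
    exact h
  -- decompositions
  have hy_decomp : ∀ k, (C ^ k *ᵥ y0) j = (C ^ k *ᵥ e) j + (C ^ k *ᵥ v) j := by
    intro k
    have hsplit : y0 = e + v := by funext i; simp [he, hv]
    rw [hsplit, Matrix.mulVec_add, Pi.add_apply]
  have hx_decomp : ∀ k, (C ^ k *ᵥ x0) j = (s / N) * (C ^ k *ᵥ y0) j + (C ^ k *ᵥ u) j := by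
    intro k
    have hsplit : x0 = (s / N) • y0 + u := by
      funext i
      simp only [Pi.add_apply, Pi.smul_apply, smul_eq_mul, hu]
      ring
    rw [hsplit, Matrix.mulVec_add, Matrix.mulVec_smul, Pi.add_apply, Pi.smul_apply,
      smul_eq_mul]
  -- eventual lower bound on the denominator
  have hb : ∀ᶠ k in atTop, δ * N / 2 ≤ (C ^ k *ᵥ y0) j := by
    have h1 : ∀ᶠ k in atTop, OpenRCAux.L1 (C ^ k *ᵥ v) < δ * N / 2 :=
      hv0.eventually_lt_const (by positivity)
    filter_upwards [h1, eventually_ge_atTop m] with k hk1 hk2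
    have h3 : |(C ^ k *ᵥ v) j| ≤ OpenRCAux.L1 (C ^ k *ᵥ v) := OpenRCAux.abs_le_L1 _ j
    have h4 := he_lb k hk2
    have h5 : -(δ * N / 2) ≤ (C ^ k *ᵥ v) j := by
      have := (abs_le.mp (h3.trans hk1.le)).1
      linarith
    rw [hy_decomp k]
    linarith
  -- numerator remainder tends to zero relative to denominator
  have hab : Tendsto (fun k => (C ^ k *ᵥ u) j / (C ^ k *ᵥ y0) j) atTop (nhds 0) := by
    apply squeeze_zero_norm' (a := fun k => OpenRCAux.L1 (C ^ k *ᵥ u) * (2 / (δ * N)))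
    · filter_upwards [hb] with k hk
      have h0 : (0 : ℝ) < δ * N / 2 := by positivity
      have hbk : δ * N / 2 ≤ |(C ^ k *ᵥ y0) j| := hk.trans (le_abs_self _)
      rw [Real.norm_eq_abs, abs_div]
      calc |(C ^ k *ᵥ u) j| / |(C ^ k *ᵥ y0) j|
          ≤ |(C ^ k *ᵥ u) j| / (δ * N / 2) := by gcongr
        _ = |(C ^ k *ᵥ u) j| * (2 / (δ * N)) := by
            field_simp
        _ ≤ OpenRCAux.L1 (C ^ k *ᵥ u) * (2 / (δ * N)) :=
            mul_le_mul_of_nonneg_right (OpenRCAux.abs_le_L1 _ j) (by positivity)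
    · have h := hu0.mul_const (2 / (δ * N))
      simpa using h
  -- conclude
  have hfinal : Tendsto (fun k => s / (N : ℝ) + (C ^ k *ᵥ u) j / (C ^ k *ᵥ y0) j)
      atTop (nhds (s / (N : ℝ))) := by
    have h := (tendsto_const_nhds (x := s / (N : ℝ)) (f := atTop)).add hab
    simpa using h
  apply hfinal.congr'
  filter_upwards [hb] with k hk
  have hbne : (C ^ k *ᵥ y0) j ≠ 0 := ne_of_gt (lt_of_lt_of_le (by positivity) hk)
  rw [hx_decomp k]
  field_simp
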